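/- Let E be a real Banach space, let e : ℝ → E be continuous, let s, ζ ∈ ℝ with ζ ≥ 0, and let n ∈ ℕ. Then ∫₀^ζ ξⁿ ( ∫₀^ξ ( e(s+ξ) − e(s+χ) ) dχ ) dξ = (1/(n+1)) ∫₀^ζ ( (n+2) ξ^{n+1} − ζ^{n+1} ) e(s+ξ) dξ. -/

import Mathlib

open intervalIntegral

theorem ibp_identity_3 {E : Type*} [NormedAddCommGroup E] [NormedSpace ℝ E] [CompleteSpace E]
    (e : ℝ → E) (he : Continuous e) (s ζ : ℝ) (hζ : 0 ≤ ζ) (n : ℕ) :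
    (∫ ξ in (0:ℝ)..ζ, ξ ^ n • ∫ χ in (0:ℝ)..ξ, (e (s + ξ) - e (s + χ)))
      = (1 / (n + 1 : ℝ)) •
          ∫ ξ in (0:ℝ)..ζ, (((n : ℝ) + 2) * ξ ^ (n + 1) - ζ ^ (n + 1)) • e (s + ξ) := by
  have hn1 : (n + 1 : ℝ) ≠ 0 := by positivity
  set g : ℝ → E := fun χ => e (s + χ) with hg
  have hgc : Continuous g := he.comp (continuous_const.add continuous_id)
  set F : ℝ → E := fun ξ => ∫ χ in (0:ℝ)..ξ, g χ with hFdef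
  have hF : ∀ ξ, HasDerivAt F (g ξ) ξ := fun ξ => (hgc.integral_hasStrictDerivAt 0 ξ).hasDerivAt
  have hFc : Continuous F := by
    rw [continuous_iff_continuousAt]; exact fun ξ => (hF ξ).continuousAt
  -- inner integral
  have hinner : ∀ ξ : ℝ, (∫ χ in (0:ℝ)..ξ, (e (s + ξ) - e (s + χ))) = ξ • g ξ - F ξ := by
    intro ξ
    rw [intervalIntegral.integral_sub intervalIntegrable_const (hgc.intervalIntegrable _ _),
      intervalIntegral.integral_const]
    simp only [sub_zero]
    rfl
  -- integration by parts
  have hG : ∀ ξ : ℝ, HasDerivAt (fun ξ : ℝ => (ξ ^ (n + 1) / ((n : ℝ) + 1)) • F ξ)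
      (ξ ^ n • F ξ + (ξ ^ (n + 1) / ((n : ℝ) + 1)) • g ξ) ξ := by
    intro ξ
    have h1 : HasDerivAt (fun ξ : ℝ => ξ ^ (n + 1) / ((n : ℝ) + 1)) (ξ ^ n) ξ := by
      have h2 := (hasDerivAt_pow (n + 1) ξ).div_const ((n : ℝ) + 1)
      rw [show ((n + 1 : ℕ) : ℝ) * ξ ^ (n + 1 - 1) / ((n : ℝ) + 1) = ξ ^ n by
        rw [Nat.add_sub_cancel]; push_cast; field_simp] at h2
      exact h2
    have h3 := h1.smul (hF ξ)
    rwa [add_comm ((ξ ^ (n + 1) / ((n : ℝ) + 1)) • g ξ) (ξ ^ n • F ξ)] at h3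
  have hcont : Continuous fun ξ : ℝ => ξ ^ n • F ξ + (ξ ^ (n + 1) / (n + 1)) • g ξ := by
    fun_prop
  have hIBP := intervalIntegral.integral_eq_sub_of_hasDerivAt (a := 0) (b := ζ)
      (fun ξ _ => hG ξ) (hcont.intervalIntegrable _ _)
  rw [intervalIntegral.integral_add (f := fun ξ => ξ ^ n • F ξ)
      (g := fun ξ => (ξ ^ (n + 1) / ((n : ℝ) + 1)) • g ξ)
      (((continuous_pow n).smul hFc).intervalIntegrable _ _)
      ((((continuous_pow (n+1)).div_const _).smul hgc).intervalIntegrable _ _)] at hIBP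
  have hsplit : (∫ ξ in (0:ℝ)..ζ, ξ ^ n • F ξ)
      = (ζ ^ (n + 1) / (n + 1)) • F ζ - ∫ ξ in (0:ℝ)..ζ, (ξ ^ (n + 1) / (n + 1)) • g ξ := by
    rw [eq_sub_iff_add_eq, hIBP]
    simp
  -- compute both sides
  have hA : (∫ ξ in (0:ℝ)..ζ, (ξ ^ (n + 1) / (n + 1)) • g ξ)
      = (1 / (n + 1 : ℝ)) • ∫ ξ in (0:ℝ)..ζ, ξ ^ (n + 1) • g ξ := by
    rw [← intervalIntegral.integral_smul]
    congr 1; ext ξ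
    rw [smul_smul]
    congr 1; field_simp
  calc (∫ ξ in (0:ℝ)..ζ, ξ ^ n • ∫ χ in (0:ℝ)..ξ, (e (s + ξ) - e (s + χ)))
      = ∫ ξ in (0:ℝ)..ζ, (ξ ^ (n + 1) • g ξ - ξ ^ n • F ξ) := by
        apply intervalIntegral.integral_congr
        intro ξ _
        simp only [hinner ξ, smul_sub, smul_smul, ← pow_succ]
    _ = (∫ ξ in (0:ℝ)..ζ, ξ ^ (n + 1) • g ξ) - ∫ ξ in (0:ℝ)..ζ, ξ ^ n • F ξ := by
        rw [intervalIntegral.integral_sub (f := fun ξ => ξ ^ (n + 1) • g ξ) (g := fun ξ => ξ ^ n • F ξ)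
          (((continuous_pow (n+1)).smul hgc).intervalIntegrable _ _)
          (((continuous_pow n).smul hFc).intervalIntegrable _ _)]
    _ = (1 / (n + 1 : ℝ)) •
          ∫ ξ in (0:ℝ)..ζ, (((n : ℝ) + 2) * ξ ^ (n + 1) - ζ ^ (n + 1)) • e (s + ξ) := by
        rw [hsplit, hA]
        have hR : (∫ ξ in (0:ℝ)..ζ, (((n : ℝ) + 2) * ξ ^ (n + 1) - ζ ^ (n + 1)) • e (s + ξ))
            = ((n : ℝ) + 2) • (∫ ξ in (0:ℝ)..ζ, ξ ^ (n + 1) • g ξ) - ζ ^ (n + 1) • F ζ := by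
          have : (∫ ξ in (0:ℝ)..ζ, (((n : ℝ) + 2) * ξ ^ (n + 1) - ζ ^ (n + 1)) • e (s + ξ))
              = ∫ ξ in (0:ℝ)..ζ,
                ((((n : ℝ) + 2) * ξ ^ (n + 1)) • g ξ - (ζ ^ (n + 1)) • g ξ) := by
            apply intervalIntegral.integral_congr
            intro ξ _
            simp only [sub_smul]
            rfl
          rw [this, intervalIntegral.integral_sub (f := fun ξ => (((n : ℝ) + 2) * ξ ^ (n + 1)) • g ξ)
            (g := fun ξ => (ζ ^ (n + 1)) • g ξ)
            (((continuous_const.mul (continuous_pow (n+1))).smul hgc).intervalIntegrable _ _)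
            ((continuous_const.smul hgc).intervalIntegrable _ _),
            intervalIntegral.integral_smul]
          congr 1
          rw [← intervalIntegral.integral_smul]
          apply intervalIntegral.integral_congr
          intro ξ _
          simp only [smul_smul]
        rw [hR]
        set A := ∫ ξ in (0:ℝ)..ζ, ξ ^ (n + 1) • g ξ
        set B := F ζ
        match_scalars <;> field_simp <;> ring
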